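/- Let A and B be unimodular positive-definite Hermitian 2×2 complex matrices, with diagonal entries a_A = A₁₁, d_A = A₂₂, a_B = B₁₁, d_B = B₂₂ (all strictly positive reals). Then (1/4)·|log((a_B·d_A)/(a_A·d_B))| ≤ dist(A, B). Equivalently, the distance between the diagonal projections diag(√(a_A/d_A), √(d_A/a_A)) and diag(√(a_B/d_B), √(d_B/a_B)) is at most dist(A, B). -/

import Mathlib

open Matrix
open scoped ComplexOrder

lemma quad_expand (M : Matrix (Fin 2) (Fin 2) ℂ) (v : Fin 2 → ℂ) :
    star v ⬝ᵥ M.mulVec v =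
      (starRingEnd ℂ) (v 0) * (M 0 0 * v 0 + M 0 1 * v 1)
      + (starRingEnd ℂ) (v 1) * (M 1 0 * v 0 + M 1 1 * v 1) := by
  simp [dotProduct, mulVec, Fin.sum_univ_two]

lemma re_quad (M : Matrix (Fin 2) (Fin 2) ℂ) (hM : M.IsHermitian) (v : Fin 2 → ℂ) :
    (star v ⬝ᵥ M.mulVec v).re =
      (M 0 0).re * Complex.normSq (v 0) + (M 1 1).re * Complex.normSq (v 1)
        + 2 * (M 0 1 * v 1 * (starRingEnd ℂ) (v 0)).re := by
  have h10 : M 1 0 = (starRingEnd ℂ) (M 0 1) := (hM.apply 1 0).symm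
  rw [quad_expand, h10]
  simp [Complex.normSq_apply, Complex.mul_re, Complex.mul_im, Complex.add_re]
  ring

lemma diag_re_pos {A : Matrix (Fin 2) (Fin 2) ℂ} (hA : A.PosDef) (i : Fin 2) :
    0 < (A i i).re := by
  have hv : (Pi.single i 1 : Fin 2 → ℂ) ≠ 0 := by
    intro h
    have := congrFun h i
    simp at this
  have := hA.re_dotProduct_pos hv
  have hq : (star (Pi.single i 1 : Fin 2 → ℂ) ⬝ᵥ A.mulVec (Pi.single i 1)).re = (A i i).re := by
    simp [dotProduct, mulVec, Fin.sum_univ_two]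
    fin_cases i <;> simp
  rw [RCLike.re_to_complex] at this
  exact hq ▸ this

lemma quad_pos {A : Matrix (Fin 2) (Fin 2) ℂ} (hA : A.PosDef) {v : Fin 2 → ℂ} (hv : v ≠ 0) :
    0 < (star v ⬝ᵥ A.mulVec v).re := by
  have := hA.re_dotProduct_pos hv
  rwa [RCLike.re_to_complex] at this

lemma det_re_herm (M : Matrix (Fin 2) (Fin 2) ℂ) (hM : M.IsHermitian) :
    M.det.re = (M 0 0).re * (M 1 1).re - Complex.normSq (M 1 0) := by
  have h01 : M 0 1 = (starRingEnd ℂ) (M 1 0) := (hM.apply 0 1).symm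
  have h00 : (M 0 0).im = 0 := Complex.conj_eq_iff_im.mp (hM.apply 0 0)
  have h11 : (M 1 1).im = 0 := Complex.conj_eq_iff_im.mp (hM.apply 1 1)
  rw [det_fin_two, h01]
  simp [Complex.normSq_apply, Complex.mul_re, Complex.mul_im, h00, h11]

lemma herm_sub_smul {A B : Matrix (Fin 2) (Fin 2) ℂ} (hA : A.IsHermitian) (hB : B.IsHermitian)
    (μ : ℝ) : (B - (μ:ℂ) • A).IsHermitian := by
  refine hB.sub ?_
  unfold Matrix.IsHermitian
  rw [conjTranspose_smul, hA]
  norm_num [Complex.conj_ofReal]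

lemma key_ineq {a d a' d' β β' u w : ℝ} (ha : 0 < a) (hd : 0 < d) (ha' : 0 < a')
    (hd' : 0 < d') (hβ : 0 ≤ β) (hβ' : 0 ≤ β')
    (hdA : a * d = 1 + β ^ 2) (hdB : a' * d' = 1 + β' ^ 2)
    (hu : u = Real.sqrt (a' * d)) (hw : w = Real.sqrt (a * d')) :
    u / w + w / u ≤ a' * d + a * d' - 2 * β * β' := by
  have hu0 : 0 < u := hu ▸ Real.sqrt_pos.mpr (by positivity)
  have hw0 : 0 < w := hw ▸ Real.sqrt_pos.mpr (by positivity)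
  have hu2 : u ^ 2 = a' * d := by rw [hu, Real.sq_sqrt (by positivity)]
  have hw2 : w ^ 2 = a * d' := by rw [hw, Real.sq_sqrt (by positivity)]
  have hS2 : (u * w) ^ 2 = (1 + β ^ 2) * (1 + β' ^ 2) := by
    rw [← hdA, ← hdB]; rw [mul_pow, hu2, hw2]; ring
  have hS1 : 1 + β * β' ≤ u * w := by
    nlinarith [mul_pos hu0 hw0, sq_nonneg (β - β'), mul_nonneg hβ hβ']
  have hAM : 2 * (u * w) ≤ u ^ 2 + w ^ 2 := by nlinarith [sq_nonneg (u - w)]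
  rw [div_add_div _ _ (ne_of_gt hw0) (ne_of_gt hu0), div_le_iff₀ (by positivity)]
  have h1 : (1 + β * β') * (u ^ 2 + w ^ 2) ≤ (u * w) * (u ^ 2 + w ^ 2) :=
    mul_le_mul_of_nonneg_right hS1 (by positivity)
  have h2 : (β * β') * (2 * (u * w)) ≤ (β * β') * (u ^ 2 + w ^ 2) :=
    mul_le_mul_of_nonneg_left hAM (mul_nonneg hβ hβ')
  nlinarith [hu2, hw2]

lemma exists_quad_nonneg (C : Matrix (Fin 2) (Fin 2) ℂ) (hC : C.IsHermitian)
    (hdet : C.det.re ≤ 0) : ∃ v : Fin 2 → ℂ, v ≠ 0 ∧ 0 ≤ (star v ⬝ᵥ C.mulVec v).re := by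
  have h01 : C 0 1 = (starRingEnd ℂ) (C 1 0) := (hC.apply 0 1).symm
  have h00 : (C 0 0).im = 0 := Complex.conj_eq_iff_im.mp (hC.apply 0 0)
  have h11 : (C 1 1).im = 0 := Complex.conj_eq_iff_im.mp (hC.apply 1 1)
  rw [det_re_herm C hC] at hdet
  rcases le_or_gt 0 (C 0 0).re with hp | hp
  · refine ⟨![1, 0], by intro h; simpa using congrFun h 0, ?_⟩
    rw [re_quad C hC]
    simpa using hp
  · refine ⟨![C 0 1, -(C 0 0)], ?_, ?_⟩
    · intro h
      have h1 := congrFun h 1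
      simp only [Matrix.cons_val_one, Matrix.head_cons, Matrix.cons_val_zero, Pi.zero_apply, neg_eq_zero] at h1
      rw [h1] at hp
      simp at hp
    · rw [re_quad C hC]
      simp only [Matrix.cons_val_zero, Matrix.cons_val_one, Matrix.head_cons, h01]
      simp only [Complex.normSq_apply, Complex.mul_re, Complex.mul_im, Complex.neg_re,
        Complex.neg_im, Complex.conj_re, Complex.conj_im, h00]
      rw [Complex.normSq_apply] at hdet
      nlinarith [mul_nonneg_of_nonpos_of_nonpos hp.le hdet]

lemma cross_sq_le (M : Matrix (Fin 2) (Fin 2) ℂ) (hM : M.IsHermitian) (v : Fin 2 → ℂ) :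
    (M 0 1 * v 1 * (starRingEnd ℂ) (v 0)).re ^ 2 ≤
      Complex.normSq (M 1 0) * (Complex.normSq (v 0) * Complex.normSq (v 1)) := by
  have h := Complex.re_sq_le_normSq (M 0 1 * v 1 * (starRingEnd ℂ) (v 0))
  have h01 : M 0 1 = (starRingEnd ℂ) (M 1 0) := (hM.apply 0 1).symm
  calc (M 0 1 * v 1 * (starRingEnd ℂ) (v 0)).re ^ 2
      = (M 0 1 * v 1 * (starRingEnd ℂ) (v 0)).re * (M 0 1 * v 1 * (starRingEnd ℂ) (v 0)).re := sq _
    _ ≤ Complex.normSq (M 0 1 * v 1 * (starRingEnd ℂ) (v 0)) := h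
    _ = Complex.normSq (M 1 0) * (Complex.normSq (v 0) * Complex.normSq (v 1)) := by
        rw [h01]
        simp [_root_.map_mul, Complex.normSq_conj]
        ring

lemma aux_amgm {X Y e : ℝ} (hX : 0 ≤ X) (hY : 0 ≤ Y) (h : e ^ 2 ≤ X * Y) :
    0 ≤ X + Y + 2 * e := by
  rcases le_or_gt 0 e with he | he
  · linarith
  · have hpos : 0 < X + Y - 2 * e := by linarith
    have h2 : 0 ≤ (X + Y - 2 * e) * (X + Y + 2 * e) := by nlinarith [sq_nonneg (X - Y)]
    nlinarith [h2, hpos]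

lemma quad_lower (M : Matrix (Fin 2) (Fin 2) ℂ) (hM : M.PosDef) (hdet : M.det = 1)
    (v : Fin 2 → ℂ) :
    Complex.normSq (v 0) + Complex.normSq (v 1)
      ≤ ((M 0 0).re + (M 1 1).re) * (star v ⬝ᵥ M.mulVec v).re := by
  have ha := diag_re_pos hM 0
  have hd := diag_re_pos hM 1
  have hD : (M 0 0).re * (M 1 1).re - Complex.normSq (M 1 0) = 1 := by
    have := det_re_herm M hM.1
    rw [hdet] at this
    simpa using this.symm
  rw [re_quad M hM.1]
  set a := (M 0 0).re
  set d := (M 1 1).re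
  set t2 := Complex.normSq (v 0)
  set s2 := Complex.normSq (v 1)
  set cr := (M 0 1 * v 1 * (starRingEnd ℂ) (v 0)).re with hcr
  have hcr2 : cr ^ 2 ≤ (a * d - 1) * (t2 * s2) := by
    have := cross_sq_le M hM.1 v
    have hq : Complex.normSq (M 1 0) = a * d - 1 := by linarith
    rw [hq] at this
    exact this
  have ht2 : 0 ≤ t2 := Complex.normSq_nonneg _
  have hs2 : 0 ≤ s2 := Complex.normSq_nonneg _
  have had : 1 ≤ a * d := by nlinarith [Complex.normSq_nonneg (M 1 0)]
  have h1 : t2 ≤ d * (a * t2 + d * s2 + 2 * cr) := by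
    have := aux_amgm (X := (a*d-1)*t2) (Y := d^2*s2) (e := d*cr)
      (mul_nonneg (by linarith) ht2) (mul_nonneg (sq_nonneg d) hs2)
      (by nlinarith [mul_nonneg (sq_nonneg d) (sub_nonneg.mpr hcr2)])
    nlinarith [this]
  have h2 : s2 ≤ a * (a * t2 + d * s2 + 2 * cr) := by
    have hcr2' : cr ^ 2 ≤ (a * d - 1) * (s2 * t2) := by nlinarith [hcr2]
    have := aux_amgm (X := (a*d-1)*s2) (Y := a^2*t2) (e := a*cr)
      (mul_nonneg (by linarith) hs2) (mul_nonneg (sq_nonneg a) ht2)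
      (by nlinarith [mul_nonneg (sq_nonneg a) (sub_nonneg.mpr hcr2')])
    nlinarith [this]
  nlinarith [h1, h2]

lemma quad_upper (M : Matrix (Fin 2) (Fin 2) ℂ) (hM : M.IsHermitian)
    (ha : 0 < (M 0 0).re) (hd : 0 < (M 1 1).re) (v : Fin 2 → ℂ) :
    (star v ⬝ᵥ M.mulVec v).re ≤
      ((M 0 0).re + (M 1 1).re + Complex.normSq (M 1 0) + 1) *
        (Complex.normSq (v 0) + Complex.normSq (v 1)) := by
  rw [re_quad M hM]
  set a := (M 0 0).re
  set d := (M 1 1).re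
  set q2 := Complex.normSq (M 1 0)
  set t2 := Complex.normSq (v 0)
  set s2 := Complex.normSq (v 1)
  set cr := (M 0 1 * v 1 * (starRingEnd ℂ) (v 0)).re with hcr
  have hcr2 : cr ^ 2 ≤ q2 * (t2 * s2) := cross_sq_le M hM v
  have ht2 : 0 ≤ t2 := Complex.normSq_nonneg _
  have hs2 : 0 ≤ s2 := Complex.normSq_nonneg _
  have hq2 : 0 ≤ q2 := Complex.normSq_nonneg _
  have h2cr : 2 * cr ≤ q2 * t2 + s2 := by
    have := aux_amgm (X := q2 * t2) (Y := s2) (e := -cr)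
      (mul_nonneg hq2 ht2) hs2 (by nlinarith [hcr2])
    linarith
  nlinarith [mul_nonneg ha.le hs2, mul_nonneg hd.le ht2, mul_nonneg hq2 hs2]

/-- The hyperbolic distance between two hermitian inner products on `ℂ²` (represented by
positive-definite matrices inducing the same volume): the maximal logarithmic expansion
of the `B`-norm relative to the `A`-norm. -/
noncomputable def hdist (A B : Matrix (Fin 2) (Fin 2) ℂ) : ℝ :=
  ⨆ v : {v : Fin 2 → ℂ // v ≠ 0},
    (1 / 2) * Real.log ((star v.1 ⬝ᵥ B.mulVec v.1).re / (star v.1 ⬝ᵥ A.mulVec v.1).re)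

/-- For unimodular positive-definite Hermitian `2×2` matrices `A, B` with
diagonal entries `a_A, d_A, a_B, d_B`, the distance between the projections to the diagonal
geodesic is at most `dist(A, B)`:
`(1/4)·|log((a_B·d_A)/(a_A·d_B))| ≤ dist(A, B)`. -/
theorem diagonal_projection_contracts (A B : Matrix (Fin 2) (Fin 2) ℂ)
    (hA : A.PosDef) (hAdet : A.det = 1)
    (hB : B.PosDef) (hBdet : B.det = 1) :
    (1 / 4) * |Real.log (((B 0 0).re * (A 1 1).re) / ((A 0 0).re * (B 1 1).re))|
      ≤ hdist A B := by
  have ha : 0 < (A 0 0).re := diag_re_pos hA 0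
  have hd : 0 < (A 1 1).re := diag_re_pos hA 1
  have ha' : 0 < (B 0 0).re := diag_re_pos hB 0
  have hd' : 0 < (B 1 1).re := diag_re_pos hB 1
  have hdA : (A 0 0).re * (A 1 1).re = 1 + Complex.normSq (A 1 0) := by
    have h := det_re_herm A hA.1
    rw [hAdet] at h
    simp only [Complex.one_re] at h
    linarith
  have hdB : (B 0 0).re * (B 1 1).re = 1 + Complex.normSq (B 1 0) := by
    have h := det_re_herm B hB.1
    rw [hBdet] at h
    simp only [Complex.one_re] at h
    linarith
  set a := (A 0 0).re with ha_def
  set d := (A 1 1).re with hd_def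
  set a' := (B 0 0).re with ha'_def
  set d' := (B 1 1).re with hd'_def
  set μ := Real.exp ((1 / 2) * |Real.log ((a' * d) / (a * d'))|) with hμdef
  have hμ0 : 0 < μ := Real.exp_pos _
  have hμ1 : 1 ≤ μ := Real.one_le_exp (by positivity)
  have hlogμ : Real.log μ = (1 / 2) * |Real.log ((a' * d) / (a * d'))| := Real.log_exp _
  -- μ + 1/μ in sqrt form
  set u := Real.sqrt (a' * d) with hu
  set w := Real.sqrt (a * d') with hw
  have hu0 : 0 < u := Real.sqrt_pos.mpr (by positivity)
  have hw0 : 0 < w := Real.sqrt_pos.mpr (by positivity)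
  have hu2 : u ^ 2 = a' * d := Real.sq_sqrt (by positivity)
  have hw2 : w ^ 2 = a * d' := Real.sq_sqrt (by positivity)
  have hratio : (a' * d) / (a * d') = (u / w) ^ 2 := by rw [div_pow, hu2, hw2]
  have hlog2 : Real.log ((a' * d) / (a * d')) = 2 * Real.log (u / w) := by
    rw [hratio, Real.log_pow]; norm_num
  have hexp : Real.exp (Real.log (u / w)) = u / w := Real.exp_log (by positivity)
  have hexp' : Real.exp (-Real.log (u / w)) = w / u := by
    rw [Real.exp_neg, hexp, inv_div]
  have hμabs : μ = Real.exp |Real.log (u / w)| := by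
    rw [hμdef, hlog2, abs_mul]
    norm_num
    ring_nf
  have hμsum : μ + 1 / μ = u / w + w / u := by
    rcases abs_cases (Real.log (u / w)) with ⟨h, _⟩ | ⟨h, _⟩
    · rw [hμabs, h, hexp, one_div, inv_div]
    · rw [hμabs, h, hexp', one_div, inv_div]; ring
  -- key trace inequality
  have hcross : (B 1 0 * (starRingEnd ℂ) (A 1 0)).re
      ≤ ‖B 1 0‖ * ‖A 1 0‖ := by
    calc (B 1 0 * (starRingEnd ℂ) (A 1 0)).re
        ≤ ‖B 1 0 * (starRingEnd ℂ) (A 1 0)‖ := Complex.re_le_norm _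
      _ = ‖B 1 0‖ * ‖A 1 0‖ := by
          rw [norm_mul, Complex.norm_conj]
  have hT : μ + 1 / μ ≤ a' * d + a * d' - 2 * (B 1 0 * (starRingEnd ℂ) (A 1 0)).re := by
    have hk := key_ineq ha hd ha' hd'
      (norm_nonneg (A 1 0)) (norm_nonneg (B 1 0))
      (by rw [Complex.sq_norm]; exact hdA) (by rw [Complex.sq_norm]; exact hdB) hu hw
    rw [hμsum]
    nlinarith [hcross, hk]
  -- the matrix C = B - μ A is Hermitian with nonpositive determinant
  have hCH : (B - (μ : ℂ) • A).IsHermitian := herm_sub_smul hA.1 hB.1 μ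
  have hCdet : ((B - (μ : ℂ) • A).det).re ≤ 0 := by
    rw [det_re_herm _ hCH]
    have e00 : (B - (μ : ℂ) • A) 0 0 = B 0 0 - (μ : ℂ) * A 0 0 := rfl
    have e11 : (B - (μ : ℂ) • A) 1 1 = B 1 1 - (μ : ℂ) * A 1 1 := rfl
    have e10 : (B - (μ : ℂ) • A) 1 0 = B 1 0 - (μ : ℂ) * A 1 0 := rfl
    rw [e00, e11, e10]
    have hre00 : (B 0 0 - (μ : ℂ) * A 0 0).re = a' - μ * a := by
      rw [Complex.sub_re, Complex.re_ofReal_mul]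
    have hre11 : (B 1 1 - (μ : ℂ) * A 1 1).re = d' - μ * d := by
      rw [Complex.sub_re, Complex.re_ofReal_mul]
    have hnq : Complex.normSq (B 1 0 - (μ : ℂ) * A 1 0)
        = Complex.normSq (B 1 0) - 2 * μ * (B 1 0 * (starRingEnd ℂ) (A 1 0)).re
          + μ ^ 2 * Complex.normSq (A 1 0) := by
      rw [Complex.normSq_sub, Complex.normSq_mul, Complex.normSq_ofReal]
      have : (B 1 0 * (starRingEnd ℂ) ((μ : ℂ) * A 1 0)).re
          = μ * (B 1 0 * (starRingEnd ℂ) (A 1 0)).re := by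
        rw [_root_.map_mul, Complex.conj_ofReal]
        rw [show B 1 0 * ((μ : ℂ) * (starRingEnd ℂ) (A 1 0))
            = (μ : ℂ) * (B 1 0 * (starRingEnd ℂ) (A 1 0)) by ring]
        rw [Complex.re_ofReal_mul]
      rw [this]; ring
    rw [hre00, hre11, hnq]
    have hμμ : μ * (1 / μ) = 1 := by field_simp
    have hTμ : μ * (μ + 1 / μ)
        ≤ μ * (a' * d + a * d' - 2 * (B 1 0 * (starRingEnd ℂ) (A 1 0)).re) :=
      mul_le_mul_of_nonneg_left hT hμ0.le
    have hdAμ : μ ^ 2 * (a * d) = μ ^ 2 * (1 + Complex.normSq (A 1 0)) := by rw [hdA]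
    linarith [hTμ, hμμ, hdAμ, hdB]
  obtain ⟨v, hv, hvC⟩ := exists_quad_nonneg _ hCH hCdet
  have hQA := quad_pos hA hv
  have hQB := quad_pos hB hv
  have hlin : (star v ⬝ᵥ (B - (μ : ℂ) • A).mulVec v)
      = (star v ⬝ᵥ B.mulVec v) - (μ : ℂ) * (star v ⬝ᵥ A.mulVec v) := by
    rw [sub_mulVec, smul_mulVec, dotProduct_sub, dotProduct_smul, smul_eq_mul]
  have hQ : μ * (star v ⬝ᵥ A.mulVec v).re ≤ (star v ⬝ᵥ B.mulVec v).re := by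
    rw [hlin] at hvC
    rw [Complex.sub_re, Complex.re_ofReal_mul] at hvC
    linarith
  -- boundedness of the supremum
  have hbdd : BddAbove (Set.range fun v : {v : Fin 2 → ℂ // v ≠ 0} =>
      (1 / 2) * Real.log ((star v.1 ⬝ᵥ B.mulVec v.1).re / (star v.1 ⬝ᵥ A.mulVec v.1).re)) := by
    refine ⟨(1 / 2) * Real.log ((a + d) * (a' + d' + Complex.normSq (B 1 0) + 1)), ?_⟩
    rintro x ⟨⟨v', hv'⟩, rfl⟩
    simp only
    have hQA' := quad_pos hA hv'
    have hQB' := quad_pos hB hv'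
    have hl := quad_lower A hA hAdet v'
    have hup := quad_upper B hB.1 ha' hd' v'
    have hle : (star v' ⬝ᵥ B.mulVec v').re / (star v' ⬝ᵥ A.mulVec v').re
        ≤ (a + d) * (a' + d' + Complex.normSq (B 1 0) + 1) := by
      rw [div_le_iff₀ hQA']
      calc (star v' ⬝ᵥ B.mulVec v').re
          ≤ (a' + d' + Complex.normSq (B 1 0) + 1)
              * (Complex.normSq (v' 0) + Complex.normSq (v' 1)) := hup
        _ ≤ (a' + d' + Complex.normSq (B 1 0) + 1)
              * ((a + d) * (star v' ⬝ᵥ A.mulVec v').re) := by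
            apply mul_le_mul_of_nonneg_left hl
            have := Complex.normSq_nonneg (B 1 0)
            linarith
        _ = (a + d) * (a' + d' + Complex.normSq (B 1 0) + 1)
              * (star v' ⬝ᵥ A.mulVec v').re := by ring
    apply mul_le_mul_of_nonneg_left _ (by norm_num : (0:ℝ) ≤ 1 / 2)
    exact Real.log_le_log (by positivity) hle
  -- conclude
  have hgoal : (1 / 4) * |Real.log ((a' * d) / (a * d'))| = (1 / 2) * Real.log μ := by
    rw [hlogμ]; ring
  rw [hgoal]
  refine le_trans ?_ (le_ciSup hbdd ⟨v, hv⟩)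
  apply mul_le_mul_of_nonneg_left _ (by norm_num : (0:ℝ) ≤ 1 / 2)
  apply Real.log_le_log hμ0
  rw [le_div_iff₀ hQA]
  linarith
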